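/- Let Σ be an unsatisfiable set of clauses with w(Σ) ≤ k. If there is no regular resolution refutation of Σ of width at most k, then there exists a regular extendible (k+1)-family of extended assignments for Σ. -/
import Mathlib


attribute [local instance] Classical.propDecidable

/-- A clause: a finite set of literals, a literal being a variable with a sign. -/
abbrev Clause := Finset (ℕ × Bool)

/-- A total truth assignment satisfies a clause if it makes some literal true. -/
def clauseSat (a : ℕ → Bool) (C : Clause) : Prop :=
  ∃ l ∈ C, (if l.2 then a l.1 else !(a l.1)) = true

/-- A set of clauses is unsatisfiable (contradictory). -/
def Unsat (S : Set Clause) : Prop := ∀ a : ℕ → Bool, ¬ ∀ C ∈ S, clauseSat a C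

/-- The variables occurring in a set of clauses. -/
def varsOf (S : Set Clause) : Set ℕ := {x | ∃ C ∈ S, ∃ b, (x, b) ∈ C}

/-- The resolventCl of C and D upon the variable x. -/
def resolventCl (C D : Clause) (x : ℕ) : Clause := C.erase (x, true) ∪ D.erase (x, false)

/-- A (general, dag-like) resolution derivation from S: a sequence of clauses each of
which is a clause of S or a resolventCl of two earlier clauses. -/
def IsDerivation (S : Set Clause) (L : List Clause) : Prop :=
  ∀ i < L.length, L.getD i ∅ ∈ S ∨
    ∃ j < i, ∃ k < i, ∃ x : ℕ,
      (x, true) ∈ L.getD j ∅ ∧ (x, false) ∈ L.getD k ∅ ∧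
      L.getD i ∅ = resolventCl (L.getD j ∅) (L.getD k ∅) x

/-- A resolution refutation of S: a derivation from S containing the empty clause. -/
def IsRefutation (S : Set Clause) (L : List Clause) : Prop :=
  IsDerivation S L ∧ (∅ : Clause) ∈ L

/-- A partial assignment, presented as a functional finite set of (variable, value)
pairs; its cardinality is the number of assigned variables. -/
def Functional (α : Finset (ℕ × Bool)) : Prop :=
  ∀ x b b', (x, b) ∈ α → (x, b') ∈ α → b = b'

/-- A partial assignment falsifies a clause if it sets every literal of it false. -/
def Falsifies (α : Finset (ℕ × Bool)) (C : Clause) : Prop := ∀ l ∈ C, (l.1, !l.2) ∈ α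

/-- An extendible k-family for S: a nonempty family of partial assignments, none
falsifying a clause of S, each of size at most k, closed under subassignments, and
such that any member of size < k can be extended inside the family so as to assign
any given variable of S. -/
def ExtFamily (S : Set Clause) (k : ℕ) (A : Set (Finset (ℕ × Bool))) : Prop :=
  A.Nonempty ∧
  (∀ α ∈ A, Functional α) ∧
  (∀ α ∈ A, ∀ C ∈ S, ¬ Falsifies α C) ∧
  (∀ α ∈ A, α.card ≤ k) ∧
  (∀ α ∈ A, ∀ β ⊆ α, β ∈ A) ∧
  (∀ α ∈ A, α.card < k → ∀ x ∈ varsOf S, ∃ β ∈ A, α ⊆ β ∧ ∃ b, (x, b) ∈ β)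

/-- Tree-style resolution derivations: a binary tree whose leaves are (occurrences of)
input clauses and whose internal nodes are resolution inferences on a stated variable. -/
inductive RTree where
  | leaf : Clause → RTree
  | node : ℕ → RTree → RTree → RTree

/-- Conclusion clause of a resolution tree. -/
def conc : RTree → Clause
  | .leaf C => C
  | .node x l r => (conc l).erase (x, true) ∪ (conc r).erase (x, false)

/-- Validity: leaves are clauses of S, and each step resolves a variable occurring
positively in the left premiss and negatively in the right premiss. -/
def valid (S : Set Clause) : RTree → Prop
  | .leaf C => C ∈ S
  | .node x l r => (x, true) ∈ conc l ∧ (x, false) ∈ conc r ∧ valid S l ∧ valid S r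

/-- Size: the number of clause occurrences. -/
def tsize : RTree → ℕ
  | .leaf _ => 1
  | .node _ l r => tsize l + tsize r + 1

/-- Width: the maximum width of a clause occurring in the tree. -/
def twidth : RTree → ℕ
  | .leaf C => C.card
  | .node x l r => max (conc (RTree.node x l r)).card (max (twidth l) (twidth r))

/-- The variables resolved upon in a tree. -/
def resolvedVars : RTree → Finset ℕ
  | .leaf _ => ∅
  | .node x l r => insert x (resolvedVars l ∪ resolvedVars r)

/-- Regularity: no variable is resolved upon twice along any path. -/
def regular : RTree → Prop
  | .leaf _ => True
  | .node x l r => x ∉ resolvedVars l ∧ x ∉ resolvedVars r ∧ regular l ∧ regular r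

/-- A tree-style resolution refutation of S. -/
def IsTreeRefutation (S : Set Clause) (t : RTree) : Prop := valid S t ∧ conc t = ∅

/-- S has a regular resolution refutation of width at most k.  (Regular refutations
unfold, width for width, into regular tree-style refutations, so regular refutation
width is captured by regular trees.) -/
def HasRegularRefutationOfWidth (S : Set Clause) (k : ℕ) : Prop :=
  ∃ t : RTree, IsTreeRefutation S t ∧ regular t ∧ twidth t ≤ k

/-- The four states of a variable in an extended assignment. -/
inductive XVal | pos | neg | star | box
deriving DecidableEq

/-- An extended assignment. -/
def XAssign := ℕ → XVal

/-- A variable is live if it is assigned 0 or 1. -/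
def live (α : XAssign) (x : ℕ) : Prop := α x = XVal.pos ∨ α x = XVal.neg

/-- An extended assignment falsifies a clause if it sets every literal of it false. -/
def XFalsifies (α : XAssign) (C : Clause) : Prop :=
  ∀ l ∈ C, α l.1 = (if l.2 then XVal.neg else XVal.pos)

/-- β ⊑ α : β results from α by forgetting some live variables. -/
def ForgetOf (β α : XAssign) : Prop :=
  ∀ x, β x = α x ∨ (live α x ∧ β x = XVal.box)

/-- α ⊆ β : β results from α by making some unassigned variables live. -/
def ExtOf (α β : XAssign) : Prop :=
  ∀ x, α x = β x ∨ (α x = XVal.star ∧ live β x)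

/-- A regular extendible k-family for S: a family of extended assignments containing
the everywhere-unassigned assignment, none falsifying a clause of S, each with at most
k live variables, closed under forgetting, and such that any member with fewer than k
live variables can be extended inside the family so as to assign any given variable of
S that it leaves unassigned (∗). -/
def RegExtFamily (S : Set Clause) (k : ℕ) (A : Set XAssign) : Prop :=
  (fun _ => XVal.star) ∈ A ∧
  (∀ α ∈ A, ∀ C ∈ S, ¬ XFalsifies α C) ∧
  (∀ α ∈ A, {x | live α x}.Finite ∧ {x | live α x}.ncard ≤ k) ∧
  (∀ α ∈ A, ∀ β : XAssign, ForgetOf β α → β ∈ A) ∧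
  (∀ α ∈ A, {x | live α x}.ncard < k → ∀ x ∈ varsOf S, α x = XVal.star →
    ∃ β ∈ A, ExtOf α β ∧ live β x)

/-- α is "bad" if some regular, valid tree of width ≤ k has its conclusion falsified
by α while resolving only on variables that α leaves unassigned. -/
def BadFor (S : Set Clause) (k : ℕ) (α : XAssign) : Prop :=
  ∃ t : RTree, valid S t ∧ regular t ∧ twidth t ≤ k ∧ XFalsifies α (conc t) ∧
    ∀ y ∈ resolvedVars t, α y = XVal.star

lemma falsified_card_le (α : XAssign) (C : Clause) (hf : XFalsifies α C)
    (hfin : {x | live α x}.Finite) : C.card ≤ {x | live α x}.ncard := by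
  classical
  have hinj : Set.InjOn Prod.fst (C : Set (ℕ × Bool)) := by
    intro l hl l' hl' hfst
    have h1 := hf l hl
    have h2 := hf l' hl'
    rw [hfst] at h1
    have hsnd : l.2 = l'.2 := by
      cases hb : l.2 <;> cases hb' : l'.2 <;> rw [hb] at h1 <;> rw [hb'] at h2 <;>
        simp_all
    exact Prod.ext hfst hsnd
  have hcard : C.card = (C.image Prod.fst).card :=
    (Finset.card_image_of_injOn hinj).symm
  have hsub : C.image Prod.fst ⊆ hfin.toFinset := by
    intro y hy
    obtain ⟨l, hl, rfl⟩ := Finset.mem_image.mp hy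
    have := hf l hl
    simp only [Set.Finite.mem_toFinset, Set.mem_setOf_eq, live]
    cases hb : l.2 <;> rw [hb] at this <;> simp_all
  rw [hcard, Set.ncard_eq_toFinset_card _ hfin]
  exact Finset.card_le_card hsub

/-- If Σ is unsatisfiable, w(Σ) ≤ k, and there is no regular resolution refutation of
Σ of width at most k, then there is a regular extendible (k+1)-family for Σ. -/
theorem regular_extendible_family_of_no_narrow_regular_refutation
    (S : Set Clause) (k : ℕ) (hU : Unsat S) (hw : ∀ C ∈ S, C.card ≤ k)
    (h : ¬ HasRegularRefutationOfWidth S k) :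
    ∃ A : Set XAssign, RegExtFamily S (k + 1) A := by
  classical
  refine ⟨{α | {x | live α x}.Finite ∧ {x | live α x}.ncard ≤ k + 1 ∧ ¬ BadFor S k α},
    ?_, ?_, ?_, ?_, ?_⟩
  · -- the everywhere-star assignment
    have hempty : {x | live (fun _ => XVal.star) x} = ∅ := by
      ext y; simp [live]
    refine ⟨by rw [hempty]; exact Set.finite_empty, by rw [hempty]; simp, ?_⟩
    rintro ⟨t, hv, hr, htw, hf, -⟩
    apply h
    refine ⟨t, ⟨hv, ?_⟩, hr, htw⟩
    by_contra hne
    obtain ⟨l, hl⟩ := Finset.nonempty_iff_ne_empty.mpr hne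
    have := hf l hl
    cases hb : l.2 <;> rw [hb] at this <;> exact XVal.noConfusion this
  · -- no member falsifies a clause
    rintro α ⟨-, -, hnb⟩ C hC hf
    exact hnb ⟨RTree.leaf C, hC, trivial, hw C hC, hf, by simp [resolvedVars]⟩
  · -- size bound
    rintro α ⟨hfin, hle, -⟩
    exact ⟨hfin, hle⟩
  · -- closure under forgetting
    rintro α ⟨hfin, hle, hnb⟩ β hβα
    have hsub : {x | live β x} ⊆ {x | live α x} := by
      intro y hy
      rcases hβα y with heq | ⟨hl, hb⟩
      · simpa [live, heq] using hy
      · rw [Set.mem_setOf_eq, live, hb] at hy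
        rcases hy with hy | hy <;> exact XVal.noConfusion hy
    refine ⟨hfin.subset hsub, le_trans (Set.ncard_le_ncard hsub hfin) hle, ?_⟩
    rintro ⟨t, hv, hr, htw, hf, hrv⟩
    apply hnb
    refine ⟨t, hv, hr, htw, ?_, ?_⟩
    · intro l hl
      have hfl := hf l hl
      rcases hβα l.1 with heq | ⟨-, hb⟩
      · rw [← heq]; exact hfl
      · rw [hb] at hfl
        cases hbool : l.2 <;> rw [hbool] at hfl <;> exact (XVal.noConfusion hfl)
    · intro y hy
      have hst := hrv y hy
      rcases hβα y with heq | ⟨-, hb⟩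
      · rw [← heq]; exact hst
      · rw [hb] at hst; exact XVal.noConfusion hst
  · -- extension
    rintro α ⟨hfin, hle, hnb⟩ hcard x hx hstar
    have hcard' : {y | live α y}.ncard ≤ k := Nat.lt_succ_iff.mp hcard
    set β : Bool → XAssign :=
      fun b y => if y = x then (if b then XVal.pos else XVal.neg) else α y with hβ
    have hβx : ∀ b, β b x = if b then XVal.pos else XVal.neg := by intro b; simp [hβ]
    have hβne : ∀ b y, y ≠ x → β b y = α y := by intro b y hy; simp [hβ, hy]
    have hlivex : ∀ b, live (β b) x := by
      intro b; cases b <;> simp [live, hβx]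
    have hliveset : ∀ b, {y | live (β b) y} = insert x {y | live α y} := by
      intro b
      ext y
      by_cases hy : y = x
      · subst hy; simp [hlivex b]
      · simp only [Set.mem_setOf_eq, Set.mem_insert_iff, hy, false_or, live,
          hβne b y hy]
    have hfinb : ∀ b, {y | live (β b) y}.Finite := by
      intro b; rw [hliveset b]; exact hfin.insert x
    have hleb : ∀ b, {y | live (β b) y}.ncard ≤ k + 1 := by
      intro b
      rw [hliveset b]
      exact le_trans (Set.ncard_insert_le x _) (by omega)
    have hext : ∀ b, ExtOf α (β b) := by
      intro b y
      by_cases hy : y = x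
      · subst hy; exact Or.inr ⟨hstar, hlivex b⟩
      · exact Or.inl (hβne b y hy).symm
    by_cases hmem : ∃ b, ¬ BadFor S k (β b)
    · obtain ⟨b, hb⟩ := hmem
      exact ⟨β b, ⟨hfinb b, hleb b, hb⟩, hext b, hlivex b⟩
    · push_neg at hmem
      -- both extensions are bad: build a resolvent tree contradicting ¬ BadFor α
      obtain ⟨t₁, hv₁, hr₁, htw₁, hf₁, hrv₁⟩ := hmem true
      obtain ⟨t₀, hv₀, hr₀, htw₀, hf₀, hrv₀⟩ := hmem false
      have hrvx : ∀ b t, (∀ y ∈ resolvedVars t, β b y = XVal.star) →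
          ∀ y ∈ resolvedVars t, y ≠ x ∧ α y = XVal.star := by
        intro b t hrv y hy
        have hst := hrv y hy
        have hyx : y ≠ x := by
          intro hyx; rw [hyx, hβx] at hst
          cases b <;> exact XVal.noConfusion hst
        exact ⟨hyx, by rw [← hβne b y hyx]; exact hst⟩
      have hrvx₁ := hrvx true t₁ hrv₁
      have hrvx₀ := hrvx false t₀ hrv₀
      -- x occurs negatively in conc t₁ and positively in conc t₀
      have hnp₁ : (x, true) ∉ conc t₁ := by
        intro hmem'
        have := hf₁ (x, true) hmem'
        rw [hβx] at this; exact XVal.noConfusion this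
      have hnp₀ : (x, false) ∉ conc t₀ := by
        intro hmem'
        have := hf₀ (x, false) hmem'
        rw [hβx] at this; exact XVal.noConfusion this
      have hkey : ∀ (b : Bool) t, valid S t → regular t → twidth t ≤ k →
          XFalsifies (β b) (conc t) → (∀ y ∈ resolvedVars t, β b y = XVal.star) →
          (x, b) ∉ conc t → (x, !b) ∈ conc t := by
        intro b t hv hr htw hf hrv hnot
        by_contra hno
        apply hnb
        refine ⟨t, hv, hr, htw, ?_, fun y hy => (hrvx b t hrv y hy).2⟩
        intro l hl
        have hlx : l.1 ≠ x := by
          intro hlx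
          have hl' : l = (x, l.2) := Prod.ext hlx rfl
          cases hb2 : l.2
          · rw [hl', hb2] at hl
            cases b
            · exact hnot hl
            · exact hno (by simpa using hl)
          · rw [hl', hb2] at hl
            cases b
            · exact hno (by simpa using hl)
            · exact hnot hl
        rw [← hβne b l.1 hlx]
        exact hf l hl
      have hp₁ : (x, false) ∈ conc t₁ := by
        have := hkey true t₁ hv₁ hr₁ htw₁ hf₁ hrv₁ hnp₁
        simpa using this
      have hp₀ : (x, true) ∈ conc t₀ := by
        have := hkey false t₀ hv₀ hr₀ htw₀ hf₀ hrv₀ hnp₀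
        simpa using this
      -- the resolvent tree
      set t : RTree := RTree.node x t₀ t₁ with ht
      have hfconc : XFalsifies α (conc t) := by
        intro l hl
        have hl' : l ∈ (conc t₀).erase (x, true) ∪ (conc t₁).erase (x, false) := hl
        rcases Finset.mem_union.mp hl' with hl'' | hl''
        · have hlmem := Finset.mem_of_mem_erase hl''
          have hlne := Finset.ne_of_mem_erase hl''
          have hlx : l.1 ≠ x := by
            intro hlx
            have : l = (x, l.2) := Prod.ext hlx rfl
            cases hb2 : l.2
            · rw [this, hb2] at hlmem; exact hnp₀ hlmem
            · rw [this, hb2] at hlne; exact hlne rfl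
          rw [← hβne false l.1 hlx]
          exact hf₀ l hlmem
        · have hlmem := Finset.mem_of_mem_erase hl''
          have hlne := Finset.ne_of_mem_erase hl''
          have hlx : l.1 ≠ x := by
            intro hlx
            have : l = (x, l.2) := Prod.ext hlx rfl
            cases hb2 : l.2
            · rw [this, hb2] at hlne; exact hlne rfl
            · rw [this, hb2] at hlmem; exact hnp₁ hlmem
          rw [← hβne true l.1 hlx]
          exact hf₁ l hlmem
      apply absurd _ hnb
      refine ⟨t, ⟨hp₀, hp₁, hv₀, hv₁⟩, ⟨?_, ?_, hr₀, hr₁⟩, ?_, hfconc, ?_⟩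
      · intro hxm; exact (hrvx₀ x hxm).1 rfl
      · intro hxm; exact (hrvx₁ x hxm).1 rfl
      · show max (conc t).card (max (twidth t₀) (twidth t₁)) ≤ k
        have h1 : (conc t).card ≤ k :=
          le_trans (falsified_card_le α (conc t) hfconc hfin) hcard'
        exact max_le h1 (max_le htw₀ htw₁)
      · intro y hy
        have hy' : y ∈ insert x (resolvedVars t₀ ∪ resolvedVars t₁) := hy
        rcases Finset.mem_insert.mp hy' with rfl | hy''
        · exact hstar
        · rcases Finset.mem_union.mp hy'' with hy3 | hy3
          · exact (hrvx₀ y hy3).2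
          · exact (hrvx₁ y hy3).2
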